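/- Let c > s > 0 and N ≥ 2. Let x₁, …, x_N : (-∞, ∞) → ℝ be uniformly Lipschitz with constant s, solving the 1D Hegselmann-Krause system with finite propagation speed: ẋ_i(t) = (1/(N-1))·Σ_j ψ(|x_j(t-τ_{ij}(t)) - x_i(t)|)·(x_j(t-τ_{ij}(t)) - x_i(t)), where c·τ_{ij}(t) = |x_i(t) - x_j(t-τ_{ij}(t))|, with ψ : [0,∞) → [0,∞) continuous, ψ(r) > 0 for r > 0, sup_{r>0} ψ(r)·r ≤ s, and with initial ordering x₁(0) ≤ … ≤ x_N(0) preserved in time. Then the diameter d_x(t) = x_N(t) - x₁(t) converges to 0 as t → ∞. -/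

import Mathlib

private lemma decay_aux (d : ℝ → ℝ) (ε : ℝ)
    (hder : ∀ t : ℝ, 0 ≤ t → ∃ g, HasDerivAt d g t ∧ g ≤ -ε) :
    AntitoneOn (fun t => d t + ε * t) (Set.Ici (0:ℝ)) := by
  apply antitoneOn_of_deriv_nonpos (convex_Ici 0)
  · intro t ht
    obtain ⟨g, hg, _⟩ := hder t ht
    exact ((hg.add (by simpa using (hasDerivAt_id t).const_mul ε)).continuousAt).continuousWithinAt
  · intro t ht
    rw [interior_Ici] at ht
    obtain ⟨g, hg, _⟩ := hder t ht.le
    exact (hg.add (by simpa using (hasDerivAt_id t).const_mul ε)).differentiableAt.differentiableWithinAt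
  · intro t ht
    rw [interior_Ici] at ht
    obtain ⟨g, hg, hgle⟩ := hder t ht.le
    have hD : HasDerivAt (fun t => d t + ε * t) (g + ε) t :=
      hg.add (by simpa using (hasDerivAt_id t).const_mul ε)
    rw [hD.deriv]
    linarith

/-- Main 1D asymptotic consensus theorem for the Hegselmann-Krause model with
finite speed of information propagation: the diameter d_x(t) = x_N(t) - x₁(t)
converges to 0 as t → ∞. -/
theorem stmt_11 (c s : ℝ) (hs : 0 < s) (hsc : s < c) (N : ℕ) (hN : 2 ≤ N)
    (ψ : ℝ → ℝ) (hψc : ContinuousOn ψ (Set.Ici 0))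
    (hψnn : ∀ r : ℝ, 0 ≤ r → 0 ≤ ψ r)
    (hψpos : ∀ r : ℝ, 0 < r → 0 < ψ r)
    (hψs : ∀ r : ℝ, 0 < r → ψ r * r ≤ s)
    (x : Fin N → ℝ → ℝ) (τ : Fin N → Fin N → ℝ → ℝ)
    (hlip : ∀ (i : Fin N) (a b : ℝ), |x i a - x i b| ≤ s * |a - b|)
    (hτ0 : ∀ (i j : Fin N) (t : ℝ), 0 ≤ τ i j t)
    (hτ : ∀ (i j : Fin N) (t : ℝ), c * τ i j t = |x i t - x j (t - τ i j t)|)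
    (hode : ∀ (i : Fin N) (t : ℝ), 0 ≤ t →
      HasDerivAt (x i)
        (((N : ℝ) - 1)⁻¹ * ∑ j : Fin N,
          ψ (|x j (t - τ i j t) - x i t|) * (x j (t - τ i j t) - x i t)) t)
    (horder : ∀ (t : ℝ), 0 ≤ t → ∀ i j : Fin N, i ≤ j → x i t ≤ x j t) :
    Filter.Tendsto (fun t => x ⟨N - 1, by omega⟩ t - x ⟨0, by omega⟩ t)
      Filter.atTop (nhds 0) := by
  have hc : 0 < c := hs.trans hsc
  set top : Fin N := ⟨N - 1, by omega⟩ with htop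
  set bot : Fin N := ⟨0, by omega⟩ with hbot
  set d : ℝ → ℝ := fun t => x top t - x bot t with hd
  show Filter.Tendsto d Filter.atTop (nhds 0)
  have hNpos : (0:ℝ) < (N:ℝ) - 1 := by
    have : (2:ℝ) ≤ N := by exact_mod_cast hN
    linarith
  have hjtop : ∀ j : Fin N, j ≤ top := by
    intro j
    rw [htop, Fin.le_def]
    have := j.isLt
    simp only []
    omega
  have hbotj : ∀ j : Fin N, bot ≤ j := by
    intro j
    rw [hbot, Fin.le_def]
    simp
  -- upper bound on delayed states seen by the top agent
  have hub : ∀ t : ℝ, 0 ≤ t → ∀ j : Fin N, x j (t - τ top j t) ≤ x top t := by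
    intro t ht j
    by_contra hcon
    push_neg at hcon
    set τ' := τ top j t with hτ'def
    have hτ'0 : 0 ≤ τ' := hτ0 top j t
    have h1 : c * τ' = x j (t - τ') - x top t := by
      have h := hτ top j t
      rw [abs_of_nonpos (by linarith)] at h
      linarith
    have h2 : |x j (t - τ') - x j t| ≤ s * τ' := by
      have h := hlip j (t - τ') t
      have habs : |t - τ' - t| = τ' := by
        rw [show t - τ' - t = -τ' by ring, abs_neg, abs_of_nonneg hτ'0]
      rwa [habs] at h
    have h3 : x j t ≤ x top t := horder t ht j top (hjtop j)
    have h4 : x j (t - τ') - x j t ≤ s * τ' :=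
      le_trans (le_abs_self _) h2
    have h5 : c * τ' ≤ s * τ' := by linarith
    have h6 : τ' = 0 := le_antisymm (by nlinarith) hτ'0
    rw [h6] at h1 hcon
    simp at h1 hcon
    linarith
  -- lower bound on delayed states seen by the bottom agent
  have hlb : ∀ t : ℝ, 0 ≤ t → ∀ j : Fin N, x bot t ≤ x j (t - τ bot j t) := by
    intro t ht j
    by_contra hcon
    push_neg at hcon
    set τ' := τ bot j t with hτ'def
    have hτ'0 : 0 ≤ τ' := hτ0 bot j t
    have h1 : c * τ' = x bot t - x j (t - τ') := by
      have h := hτ bot j t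
      rw [abs_of_nonneg (by linarith)] at h
      linarith
    have h2 : |x j (t - τ') - x j t| ≤ s * τ' := by
      have h := hlip j (t - τ') t
      have habs : |t - τ' - t| = τ' := by
        rw [show t - τ' - t = -τ' by ring, abs_neg, abs_of_nonneg hτ'0]
      rwa [habs] at h
    have h3 : x bot t ≤ x j t := horder t ht bot j (hbotj j)
    have h4 := abs_le.mp h2
    have h5 : c * τ' ≤ s * τ' := by
      have := h4.1
      linarith
    have h6 : τ' = 0 := le_antisymm (by nlinarith) hτ'0
    rw [h6] at h1 hcon
    simp at h1 hcon
    linarith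
  -- the delayed distance from top to the delayed bottom agent
  set Dt : ℝ → ℝ := fun t => x top t - x bot (t - τ top bot t) with hDtdef
  have hDt0 : ∀ t : ℝ, 0 ≤ t → 0 ≤ Dt t := fun t ht => sub_nonneg.mpr (hub t ht bot)
  have hτD : ∀ t : ℝ, 0 ≤ t → c * τ top bot t = Dt t := by
    intro t ht
    have h := hτ top bot t
    rw [abs_of_nonneg (sub_nonneg.mpr (hub t ht bot))] at h
    exact h
  have hDtub : ∀ t : ℝ, 0 ≤ t → (c - s) * Dt t ≤ c * d t := by
    intro t ht
    have h1 := hτD t ht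
    have hτ'0 := hτ0 top bot t
    have h2 : |x bot (t - τ top bot t) - x bot t| ≤ s * τ top bot t := by
      have h := hlip bot (t - τ top bot t) t
      have habs : |t - τ top bot t - t| = τ top bot t := by
        rw [show t - τ top bot t - t = -(τ top bot t) by ring, abs_neg, abs_of_nonneg hτ'0]
      rwa [habs] at h
    have h3 := abs_le.mp h2
    have hDdef : Dt t = x top t - x bot (t - τ top bot t) := rfl
    have hddef : d t = x top t - x bot t := rfl
    nlinarith [h3.1, h3.2]
  have hDtlb : ∀ t : ℝ, 0 ≤ t → c * d t ≤ (c + s) * Dt t := by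
    intro t ht
    have h1 := hτD t ht
    have hτ'0 := hτ0 top bot t
    have h2 : |x bot (t - τ top bot t) - x bot t| ≤ s * τ top bot t := by
      have h := hlip bot (t - τ top bot t) t
      have habs : |t - τ top bot t - t| = τ top bot t := by
        rw [show t - τ top bot t - t = -(τ top bot t) by ring, abs_neg, abs_of_nonneg hτ'0]
      rwa [habs] at h
    have h3 := abs_le.mp h2
    have hDdef : Dt t = x top t - x bot (t - τ top bot t) := rfl
    have hddef : d t = x top t - x bot t := rfl
    nlinarith [h3.1, h3.2]
  have hinv : (0:ℝ) ≤ ((N:ℝ) - 1)⁻¹ := inv_nonneg.mpr hNpos.le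
  -- derivative bound
  have hder : ∀ t : ℝ, 0 ≤ t →
      ∃ g, HasDerivAt d g t ∧ g ≤ ((N:ℝ) - 1)⁻¹ * (ψ (Dt t) * (-(Dt t))) := by
    intro t ht
    refine ⟨_, (hode top t ht).sub (hode bot t ht), ?_⟩
    have hSbot : 0 ≤ ∑ j : Fin N,
        ψ (|x j (t - τ bot j t) - x bot t|) * (x j (t - τ bot j t) - x bot t) :=
      Finset.sum_nonneg fun j _ =>
        mul_nonneg (hψnn _ (abs_nonneg _)) (sub_nonneg.mpr (hlb t ht j))
    have hStop : (∑ j : Fin N,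
        ψ (|x j (t - τ top j t) - x top t|) * (x j (t - τ top j t) - x top t))
        ≤ ψ (Dt t) * (-(Dt t)) := by
      have h2 := Finset.sum_erase_add Finset.univ
        (fun j => ψ (|x j (t - τ top j t) - x top t|) * (x j (t - τ top j t) - x top t))
        (Finset.mem_univ bot)
      have h1 : (∑ j ∈ Finset.univ.erase bot,
          ψ (|x j (t - τ top j t) - x top t|) * (x j (t - τ top j t) - x top t)) ≤ 0 :=
        Finset.sum_nonpos fun j _ =>
          mul_nonpos_of_nonneg_of_nonpos (hψnn _ (abs_nonneg _)) (sub_nonpos.mpr (hub t ht j))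
      have h3 : ψ (|x bot (t - τ top bot t) - x top t|) * (x bot (t - τ top bot t) - x top t)
          = ψ (Dt t) * (-(Dt t)) := by
        have habs : |x bot (t - τ top bot t) - x top t| = Dt t := by
          rw [abs_of_nonpos (sub_nonpos.mpr (hub t ht bot))]
          show -(x bot (t - τ top bot t) - x top t) = x top t - x bot (t - τ top bot t)
          ring
        rw [habs]
        show ψ (Dt t) * (x bot (t - τ top bot t) - x top t) = _
        have : x bot (t - τ top bot t) - x top t = -(Dt t) := by
          show _ = -(x top t - x bot (t - τ top bot t)); ring
        rw [this]
      linarith [h2, h1, h3.ge, h3.le]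
    have hmul := mul_le_mul_of_nonneg_left hStop hinv
    have hmul2 := mul_le_mul_of_nonneg_left hSbot hinv
    linarith
  -- d is antitone on [0, ∞)
  have hder0 : ∀ t : ℝ, 0 ≤ t → ∃ g, HasDerivAt d g t ∧ g ≤ -(0:ℝ) := by
    intro t ht
    obtain ⟨g, hg, hgle⟩ := hder t ht
    refine ⟨g, hg, hgle.trans ?_⟩
    rw [neg_zero]
    exact mul_nonpos_of_nonneg_of_nonpos hinv
      (mul_nonpos_of_nonneg_of_nonpos (hψnn _ (hDt0 t ht)) (neg_nonpos.mpr (hDt0 t ht)))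
  have hAnti : AntitoneOn d (Set.Ici 0) := by
    have := decay_aux d 0 hder0
    simpa using this
  have hnn : ∀ t : ℝ, 0 ≤ t → 0 ≤ d t := fun t ht =>
    sub_nonneg.mpr (horder t ht bot top (hjtop bot))
  set D' : ℝ → ℝ := fun t => d (max t 0) with hD'def
  have hAntiD' : Antitone D' := fun a b hab =>
    hAnti (Set.mem_Ici.mpr (le_max_right a 0)) (Set.mem_Ici.mpr (le_max_right b 0))
      (max_le_max hab le_rfl)
  have hBdd : BddBelow (Set.range D') := by
    refine ⟨0, ?_⟩
    rintro y ⟨t, rfl⟩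
    exact hnn _ (le_max_right t 0)
  have htend : Filter.Tendsto D' Filter.atTop (nhds (⨅ t, D' t)) :=
    tendsto_atTop_ciInf hAntiD' hBdd
  set L : ℝ := ⨅ t, D' t with hLdef
  have hL0 : 0 ≤ L := le_ciInf fun t => hnn _ (le_max_right t 0)
  have hLle : ∀ t : ℝ, 0 ≤ t → L ≤ d t := by
    intro t ht
    have := ciInf_le hBdd t
    rwa [show D' t = d t by simp [hD'def, max_eq_left ht]] at this
  have hLeq : L = 0 := by
    by_contra hne
    have hL : 0 < L := lt_of_le_of_ne hL0 (Ne.symm hne)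
    set δ : ℝ := L * c / (c + s) with hδdef
    have hcs : (0:ℝ) < c + s := by linarith
    have hδ : 0 < δ := by positivity
    have hδle : ∀ t : ℝ, 0 ≤ t → δ ≤ Dt t := by
      intro t ht
      rw [hδdef, div_le_iff₀ hcs]
      have h1 := hDtlb t ht
      have h2 := hLle t ht
      nlinarith
    set M : ℝ := c * d 0 / (c - s) with hMdef
    have hcs' : (0:ℝ) < c - s := by linarith
    have hMle : ∀ t : ℝ, 0 ≤ t → Dt t ≤ M := by
      intro t ht
      rw [hMdef, le_div_iff₀ hcs']
      have h1 := hDtub t ht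
      have h2 : d t ≤ d 0 := hAnti Set.self_mem_Ici (Set.mem_Ici.mpr ht) ht
      nlinarith
    have hne' : (Set.Icc δ M).Nonempty := ⟨Dt 0, hδle 0 le_rfl, hMle 0 le_rfl⟩
    have hsub : Set.Icc δ M ⊆ Set.Ici 0 := fun r hr => le_trans hδ.le hr.1
    obtain ⟨r₀, hr₀, hmin⟩ := isCompact_Icc.exists_isMinOn hne' (hψc.mono hsub)
    have hψr : 0 < ψ r₀ := hψpos r₀ (lt_of_lt_of_le hδ hr₀.1)
    set ε : ℝ := ((N:ℝ) - 1)⁻¹ * (ψ r₀ * δ) with hεdef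
    have hε : 0 < ε := mul_pos (inv_pos.mpr hNpos) (mul_pos hψr hδ)
    have hder' : ∀ t : ℝ, 0 ≤ t → ∃ g, HasDerivAt d g t ∧ g ≤ -ε := by
      intro t ht
      obtain ⟨g, hg, hgle⟩ := hder t ht
      refine ⟨g, hg, hgle.trans ?_⟩
      have h1 : ψ r₀ ≤ ψ (Dt t) := hmin ⟨hδle t ht, hMle t ht⟩
      have h2 : δ ≤ Dt t := hδle t ht
      have h3 : ψ r₀ * δ ≤ ψ (Dt t) * Dt t := by nlinarith
      have h4 := mul_le_mul_of_nonneg_left h3 hinv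
      rw [hεdef]
      nlinarith
    have hkey := decay_aux d ε hder'
    set T : ℝ := (d 0 + 1) / ε with hTdef
    have hd00 : 0 ≤ d 0 := hnn 0 le_rfl
    have hT : 0 ≤ T := by positivity
    have hK := hkey Set.self_mem_Ici (Set.mem_Ici.mpr hT) hT
    simp only [] at hK
    have hεT : ε * T = d 0 + 1 := by
      rw [hTdef]; field_simp
    have hdT := hnn T hT
    rw [hεT] at hK
    linarith
  have htend0 : Filter.Tendsto D' Filter.atTop (nhds 0) := hLeq ▸ htend
  apply htend0.congr'
  filter_upwards [Filter.eventually_ge_atTop (0:ℝ)] with t ht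
  simp [hD'def, max_eq_left ht]
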